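/- Let H be a torsion-free Hopf algebra over a PID R, and define H° = {f ∈ Hom_R(H,R) : f vanishes on some ideal I with H/I finitely generated over R}. Then every f ∈ H° vanishes on an ideal I with H/I free of finite rank, and H° is an R-subalgebra of Hom_R(H,R) closed under the convolution product, counit-unit, and antipode dual, i.e. H° is a Hopf R-algebra. -/

import Mathlib

open TensorProduct

variable (R : Type*) [CommRing R] [IsDomain R] [IsPrincipalIdealRing R]
variable (H : Type*) [Ring H] [HopfAlgebra R H]

/-- `f : H → R` vanishes on a two-sided ideal `I` of `H` such that `H/I` is a finitely
generated `R`-module. -/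
def VanishesOnCofg (f : H →ₗ[R] R) : Prop :=
  ∃ I : Submodule R H,
    (∀ x ∈ I, ∀ h : H, h * x ∈ I ∧ x * h ∈ I) ∧
    (∀ x ∈ I, f x = 0) ∧
    (∃ S : Finset H, ∀ h : H, ∃ i ∈ I, h - i ∈ Submodule.span R (S : Set H))

/-- `f : H → R` vanishes on a two-sided ideal `I` of `H` such that `H/I` is a free
`R`-module of finite rank (witnessed by elements whose classes form a basis of `H/I`). -/
def VanishesOnCofree (f : H →ₗ[R] R) : Prop :=
  ∃ I : Submodule R H,
    (∀ x ∈ I, ∀ h : H, h * x ∈ I ∧ x * h ∈ I) ∧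
    (∀ x ∈ I, f x = 0) ∧
    (∃ (m : ℕ) (b : Fin m → H), ∀ h : H, ∃! c : Fin m → R, h - ∑ j, c j • b j ∈ I)

/-- The convolution product `(f * g)(x) = ∑ f(x₁) g(x₂)` on `Hom_R(H, R)`. -/
noncomputable def convolution (f g : H →ₗ[R] R) : H →ₗ[R] R :=
  (TensorProduct.lid R R).toLinearMap ∘ₗ TensorProduct.map f g ∘ₗ
    Coalgebra.comul (R := R) (A := H)


open Coalgebra HopfAlgebra
open scoped Coalgebra

set_option linter.unusedSectionVars false

namespace HopfDualAux

section
variable {R : Type*} [CommRing R]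
variable {H : Type*} [Ring H] [HopfAlgebra R H]


noncomputable def conv₂ (f g : H ⊗[R] H →ₗ[R] H) : H ⊗[R] H →ₗ[R] H :=
  LinearMap.mul' R H ∘ₗ TensorProduct.map f g ∘ₗ
    ((tensorTensorTensorComm R H H H H).toLinearMap ∘ₗ
      TensorProduct.map Coalgebra.comul Coalgebra.comul)

lemma conv₂_tmul {ι κ : Type*} (f g : H ⊗[R] H →ₗ[R] H) (x y : H) (rx : Repr R x ι)
    (ry : Repr R y κ) :
    conv₂ f g (x ⊗ₜ y) = ∑ i ∈ rx.index, ∑ j ∈ ry.index,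
      f (rx.left i ⊗ₜ ry.left j) * g (rx.right i ⊗ₜ ry.right j) := by
  have hx : Coalgebra.comul (R := R) x = ∑ i ∈ rx.index, rx.left i ⊗ₜ rx.right i := rx.eq.symm
  have hy : Coalgebra.comul (R := R) y = ∑ j ∈ ry.index, ry.left j ⊗ₜ ry.right j := ry.eq.symm
  simp only [conv₂, LinearMap.comp_apply, map_tmul, hx, hy, sum_tmul, tmul_sum, map_sum,
    LinearEquiv.coe_coe, tensorTensorTensorComm_tmul, LinearMap.mul'_apply]
  exact Finset.sum_comm

lemma repr_sum_counit_smul_left {ι : Type*} {x : H} (r : Repr R x ι) :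
    ∑ i ∈ r.index, Coalgebra.counit (R := R) (r.left i) • r.right i = x := by
  have := congrArg (TensorProduct.lid R H) (Coalgebra.sum_counit_tmul_eq (R := R) r)
  rw [map_sum] at this
  simp only [lid_tmul] at this
  simpa using this

lemma repr_sum_counit_smul_right {ι : Type*} {x : H} (r : Repr R x ι) :
    ∑ i ∈ r.index, Coalgebra.counit (R := R) (r.right i) • r.left i = x := by
  have := congrArg (TensorProduct.rid R H) (Coalgebra.sum_tmul_counit_eq (R := R) r)
  rw [map_sum] at this
  simp only [rid_tmul] at this
  simpa using this

noncomputable def cunit : H ⊗[R] H →ₗ[R] H :=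
  Algebra.linearMap R H ∘ₗ LinearMap.mul' R R ∘ₗ
    TensorProduct.map (Coalgebra.counit) (Coalgebra.counit)

lemma cunit_tmul (x y : H) :
    (cunit : H ⊗[R] H →ₗ[R] H) (x ⊗ₜ y) =
      (Coalgebra.counit (R := R) x * Coalgebra.counit (R := R) y) • (1 : H) := by
  simp [cunit, Algebra.algebraMap_eq_smul_one]

lemma conv₂_cunit_right (f : H ⊗[R] H →ₗ[R] H) : conv₂ f cunit = f := by
  apply TensorProduct.ext'
  intro x y
  rw [conv₂_tmul f cunit x y (ℛ R x) (ℛ R y)]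
  conv_rhs => rw [← repr_sum_counit_smul_right (ℛ R x), ← repr_sum_counit_smul_right (ℛ R y)]
  simp only [cunit_tmul, sum_tmul, tmul_sum, map_sum, smul_tmul', tmul_smul, map_smul,
    mul_smul_comm, mul_one, smul_smul]
  rw [Finset.sum_comm]
  refine Finset.sum_congr rfl fun j _ => ?_
  rw [Finset.smul_sum]
  refine Finset.sum_congr rfl fun i _ => ?_
  rw [← smul_tmul', map_smul, smul_smul, mul_comm]

lemma conv₂_cunit_left (f : H ⊗[R] H →ₗ[R] H) : conv₂ cunit f = f := by
  apply TensorProduct.ext'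
  intro x y
  rw [conv₂_tmul cunit f x y (ℛ R x) (ℛ R y)]
  conv_rhs => rw [← repr_sum_counit_smul_left (ℛ R x), ← repr_sum_counit_smul_left (ℛ R y)]
  simp only [cunit_tmul, sum_tmul, tmul_sum, map_sum, smul_tmul', tmul_smul, map_smul,
    smul_mul_assoc, one_mul, smul_smul]
  rw [Finset.sum_comm]
  refine Finset.sum_congr rfl fun j _ => ?_
  rw [Finset.smul_sum]
  refine Finset.sum_congr rfl fun i _ => ?_
  rw [← smul_tmul', map_smul, smul_smul, mul_comm]

/-- A representation of `comul (x * y)` built from representations of `x` and `y`. -/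
noncomputable def Repr.mul {ι κ : Type*} {x y : H} (rx : Repr R x ι) (ry : Repr R y κ) :
    Repr R (x * y) (ι × κ) where
  index := rx.index ×ˢ ry.index
  left := fun p => rx.left p.1 * ry.left p.2
  right := fun p => rx.right p.1 * ry.right p.2
  eq := by
    rw [Bialgebra.comul_mul, ← rx.eq, ← ry.eq, Finset.sum_mul_sum]
    rw [Finset.sum_product]
    simp [Algebra.TensorProduct.tmul_mul_tmul]

lemma conv₂_SM_M : conv₂ ((antipode R : H →ₗ[R] H) ∘ₗ LinearMap.mul' R H) (LinearMap.mul' R H)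
    = cunit := by
  apply TensorProduct.ext'
  intro x y
  rw [conv₂_tmul _ _ x y (ℛ R x) (ℛ R y), cunit_tmul]
  have := HopfAlgebra.sum_antipode_mul_eq_smul (Repr.mul (ℛ R x) (ℛ R y))
  simp only [Repr.mul, Bialgebra.counit_mul] at this
  rw [Finset.sum_product] at this
  simpa using this

lemma conv₂_M_MSS : conv₂ (LinearMap.mul' R H)
    (LinearMap.mul' R H ∘ₗ TensorProduct.map (antipode R : H →ₗ[R] H) (antipode R)
      ∘ₗ (TensorProduct.comm R H H).toLinearMap) = cunit := by
  apply TensorProduct.ext'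
  intro x y
  rw [conv₂_tmul _ _ x y (ℛ R x) (ℛ R y), cunit_tmul]
  have hy := HopfAlgebra.sum_mul_antipode_eq_smul (ℛ R y)
  have hx := HopfAlgebra.sum_mul_antipode_eq_smul (ℛ R x)
  calc ∑ i ∈ (ℛ R x).index, ∑ j ∈ (ℛ R y).index,
        (LinearMap.mul' R H) ((ℛ R x).left i ⊗ₜ[R] (ℛ R y).left j) *
          (LinearMap.mul' R H ∘ₗ TensorProduct.map (antipode R : H →ₗ[R] H) (antipode R)
            ∘ₗ (TensorProduct.comm R H H).toLinearMap) ((ℛ R x).right i ⊗ₜ[R] (ℛ R y).right j)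
      = ∑ i ∈ (ℛ R x).index, (ℛ R x).left i *
          (∑ j ∈ (ℛ R y).index, (ℛ R y).left j * antipode (R := R) ((ℛ R y).right j)) *
            antipode (R := R) ((ℛ R x).right i) := by
        refine Finset.sum_congr rfl fun i _ => ?_
        rw [Finset.mul_sum, Finset.sum_mul]
        refine Finset.sum_congr rfl fun j _ => ?_
        simp only [LinearMap.comp_apply, LinearEquiv.coe_coe, comm_tmul, map_tmul,
          LinearMap.mul'_apply]
        noncomm_ring
    _ = (Coalgebra.counit (R := R) x * Coalgebra.counit (R := R) y) • (1 : H) := by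
        rw [hy]
        simp only [mul_smul_comm, smul_mul_assoc, one_mul, mul_one]
        rw [← Finset.smul_sum, hx, smul_smul, mul_comm]

noncomputable def theta (f g h : H ⊗[R] H →ₗ[R] H) :
    (H ⊗[R] (H ⊗[R] H)) ⊗[R] (H ⊗[R] (H ⊗[R] H)) →ₗ[R] H :=
  LinearMap.mul' R H ∘ₗ
    TensorProduct.map f (LinearMap.mul' R H ∘ₗ TensorProduct.map g h ∘ₗ
      (tensorTensorTensorComm R H H H H).toLinearMap) ∘ₗ
    (tensorTensorTensorComm R H (H ⊗[R] H) H (H ⊗[R] H)).toLinearMap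

lemma theta_tmul (f g h : H ⊗[R] H →ₗ[R] H) (u₁ u₂ u₃ v₁ v₂ v₃ : H) :
    theta f g h ((u₁ ⊗ₜ (u₂ ⊗ₜ u₃)) ⊗ₜ (v₁ ⊗ₜ (v₂ ⊗ₜ v₃)))
      = f (u₁ ⊗ₜ v₁) * (g (u₂ ⊗ₜ v₂) * h (u₃ ⊗ₜ v₃)) := by
  simp [theta, tensorTensorTensorComm_tmul]

lemma conv₂_assoc (f g h : H ⊗[R] H →ₗ[R] H) :
    conv₂ (conv₂ f g) h = conv₂ f (conv₂ g h) := by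
  apply TensorProduct.ext'
  intro x y
  have rx := ℛ R x
  have ry := ℛ R y
  let rxl : ∀ i, Repr R (rx.left i) (H × H) := fun i => ℛ R (rx.left i)
  let rxr : ∀ i, Repr R (rx.right i) (H × H) := fun i => ℛ R (rx.right i)
  let ryl : ∀ j, Repr R (ry.left j) (H × H) := fun j => ℛ R (ry.left j)
  let ryr : ∀ j, Repr R (ry.right j) (H × H) := fun j => ℛ R (ry.right j)
  have hL1 : conv₂ (conv₂ f g) h (x ⊗ₜ y) =
      ∑ i ∈ rx.index, ∑ j ∈ ry.index, ∑ k ∈ (rxl i).index, ∑ l ∈ (ryl j).index,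
        f ((rxl i).left k ⊗ₜ (ryl j).left l) *
          (g ((rxl i).right k ⊗ₜ (ryl j).right l) * h (rx.right i ⊗ₜ ry.right j)) := by
    rw [conv₂_tmul _ _ x y rx ry]
    refine Finset.sum_congr rfl fun i _ => Finset.sum_congr rfl fun j _ => ?_
    rw [conv₂_tmul f g _ _ (rxl i) (ryl j), Finset.sum_mul]
    refine Finset.sum_congr rfl fun k _ => ?_
    rw [Finset.sum_mul]
    exact Finset.sum_congr rfl fun l _ => (mul_assoc _ _ _)
  have hR1 : conv₂ f (conv₂ g h) (x ⊗ₜ y) =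
      ∑ i ∈ rx.index, ∑ j ∈ ry.index, ∑ k ∈ (rxr i).index, ∑ l ∈ (ryr j).index,
        f (rx.left i ⊗ₜ ry.left j) *
          (g ((rxr i).left k ⊗ₜ (ryr j).left l) * h ((rxr i).right k ⊗ₜ (ryr j).right l)) := by
    rw [conv₂_tmul _ _ x y rx ry]
    refine Finset.sum_congr rfl fun i _ => Finset.sum_congr rfl fun j _ => ?_
    rw [conv₂_tmul g h _ _ (rxr i) (ryr j), Finset.mul_sum]
    exact Finset.sum_congr rfl fun k _ => Finset.mul_sum _ _ _
  have hL2 : (∑ i ∈ rx.index, ∑ j ∈ ry.index, ∑ k ∈ (rxl i).index, ∑ l ∈ (ryl j).index,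
      f ((rxl i).left k ⊗ₜ (ryl j).left l) *
        (g ((rxl i).right k ⊗ₜ (ryl j).right l) * h (rx.right i ⊗ₜ ry.right j))) =
      theta f g h ((∑ i ∈ rx.index, ∑ k ∈ (rxl i).index,
          (rxl i).left k ⊗ₜ ((rxl i).right k ⊗ₜ rx.right i)) ⊗ₜ
        (∑ j ∈ ry.index, ∑ l ∈ (ryl j).index,
          (ryl j).left l ⊗ₜ ((ryl j).right l ⊗ₜ ry.right j))) := by
    simp only [sum_tmul, tmul_sum, map_sum, theta_tmul]
    rw [Finset.sum_comm]
    refine Finset.sum_congr rfl fun j _ => ?_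
    exact (Finset.sum_congr rfl fun i _ => Finset.sum_comm).trans Finset.sum_comm
  have hR2 : (∑ i ∈ rx.index, ∑ j ∈ ry.index, ∑ k ∈ (rxr i).index, ∑ l ∈ (ryr j).index,
      f (rx.left i ⊗ₜ ry.left j) *
        (g ((rxr i).left k ⊗ₜ (ryr j).left l) * h ((rxr i).right k ⊗ₜ (ryr j).right l))) =
      theta f g h ((∑ i ∈ rx.index, ∑ k ∈ (rxr i).index,
          rx.left i ⊗ₜ ((rxr i).left k ⊗ₜ (rxr i).right k)) ⊗ₜ
        (∑ j ∈ ry.index, ∑ l ∈ (ryr j).index,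
          ry.left j ⊗ₜ ((ryr j).left l ⊗ₜ (ryr j).right l))) := by
    simp only [sum_tmul, tmul_sum, map_sum, theta_tmul]
    rw [Finset.sum_comm]
    refine Finset.sum_congr rfl fun j _ => ?_
    exact (Finset.sum_congr rfl fun i _ => Finset.sum_comm).trans Finset.sum_comm
  rw [hL1, hR1, hL2, hR2, Coalgebra.sum_tmul_tmul_eq rx rxl rxr,
    Coalgebra.sum_tmul_tmul_eq ry ryl ryr]
lemma antipode_mul (a b : H) :
    antipode (R := R) (a * b) = antipode (R := R) b * antipode (R := R) a := by
  have key : (antipode R : H →ₗ[R] H) ∘ₗ LinearMap.mul' R H =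
      LinearMap.mul' R H ∘ₗ TensorProduct.map (antipode R : H →ₗ[R] H) (antipode R)
        ∘ₗ (TensorProduct.comm R H H).toLinearMap := by
    calc (antipode R : H →ₗ[R] H) ∘ₗ LinearMap.mul' R H
        = conv₂ ((antipode R : H →ₗ[R] H) ∘ₗ LinearMap.mul' R H) cunit := by
          rw [conv₂_cunit_right]
      _ = conv₂ ((antipode R : H →ₗ[R] H) ∘ₗ LinearMap.mul' R H)
            (conv₂ (LinearMap.mul' R H)
              (LinearMap.mul' R H ∘ₗ TensorProduct.map (antipode R : H →ₗ[R] H) (antipode R)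
                ∘ₗ (TensorProduct.comm R H H).toLinearMap)) := by rw [conv₂_M_MSS]
      _ = conv₂ (conv₂ ((antipode R : H →ₗ[R] H) ∘ₗ LinearMap.mul' R H) (LinearMap.mul' R H))
            (LinearMap.mul' R H ∘ₗ TensorProduct.map (antipode R : H →ₗ[R] H) (antipode R)
              ∘ₗ (TensorProduct.comm R H H).toLinearMap) := by rw [conv₂_assoc]
      _ = conv₂ cunit (LinearMap.mul' R H ∘ₗ TensorProduct.map (antipode R : H →ₗ[R] H) (antipode R)
              ∘ₗ (TensorProduct.comm R H H).toLinearMap) := by rw [conv₂_SM_M]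
      _ = _ := conv₂_cunit_left _
  have := congrArg (fun φ : H ⊗[R] H →ₗ[R] H => φ (a ⊗ₜ b)) key
  simpa using this



lemma cofg_iff (I : Submodule R H) :
    (∃ S : Finset H, ∀ h : H, ∃ i ∈ I, h - i ∈ Submodule.span R (S : Set H)) ↔
      Module.Finite R (H ⧸ I) := by
  classical
  constructor
  · rintro ⟨S, hS⟩
    refine ⟨⟨S.image I.mkQ, ?_⟩⟩
    rw [Finset.coe_image, ← Submodule.map_span, eq_top_iff]
    rintro t -
    obtain ⟨h, rfl⟩ := I.mkQ_surjective t
    obtain ⟨i, hi, hs⟩ := hS h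
    have : I.mkQ h = I.mkQ (h - i) := by
      simp [LinearMap.map_sub, (Submodule.Quotient.mk_eq_zero I).mpr hi, Submodule.mkQ_apply]
    rw [this]
    exact Submodule.mem_map_of_mem hs
  · rintro ⟨⟨T, hT⟩⟩
    let sec : H ⧸ I → H := Function.surjInv I.mkQ_surjective
    refine ⟨T.image sec, fun h => ?_⟩
    have hmem : I.mkQ h ∈ Submodule.map I.mkQ (Submodule.span R ((T.image sec : Finset H) : Set H)) := by
      rw [Submodule.map_span, Finset.coe_image, Set.image_image]
      have h2 : (fun x => I.mkQ (sec x)) = fun x : H ⧸ I => x := by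
        funext x; exact Function.surjInv_eq I.mkQ_surjective x
      rw [h2, Set.image_id']
      rw [hT]
      exact Submodule.mem_top
    obtain ⟨s, hs, hsh⟩ := hmem
    refine ⟨h - s, ?_, ?_⟩
    · rw [← Submodule.Quotient.mk_eq_zero I]
      have : Submodule.Quotient.mk (p := I) (h - s) = I.mkQ h - I.mkQ s := by simp
      rw [this, hsh, sub_self]
    · simpa using hs

lemma finite_quot_ker {M : Type*} [AddCommGroup M] [Module R M] [Module.Finite R M]
    [IsNoetherianRing R] (q : H →ₗ[R] M) : Module.Finite R (H ⧸ LinearMap.ker q) := by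
  haveI : IsNoetherian R M := isNoetherian_of_isNoetherianRing_of_finite R M
  haveI := isNoetherian_of_injective ((LinearMap.ker q).liftQ q le_rfl)
    (LinearMap.ker_eq_bot.mp (Submodule.ker_liftQ_eq_bot _ _ le_rfl le_rfl))
  infer_instance

lemma finite_quot_of_le {I J : Submodule R H} (hle : I ≤ J) [Module.Finite R (H ⧸ I)] :
    Module.Finite R (H ⧸ J) := by
  refine Module.Finite.of_surjective (Submodule.mapQ I J LinearMap.id hle) fun t => ?_
  obtain ⟨x, rfl⟩ := J.mkQ_surjective t
  exact ⟨I.mkQ x, by simp [Submodule.mapQ_apply]⟩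

/-- The saturation of a submodule: elements killed into `I` by a nonzero scalar. -/
def sat (I : Submodule R H) [IsDomain R] : Submodule R H where
  carrier := {x | ∃ r : R, r ≠ 0 ∧ r • x ∈ I}
  add_mem' := by
    rintro a b ⟨r, hr, hra⟩ ⟨s, hs, hsb⟩
    refine ⟨r * s, mul_ne_zero hr hs, ?_⟩
    rw [smul_add]
    exact Submodule.add_mem I
      (by rw [mul_comm, mul_smul]; exact I.smul_mem s hra)
      (by rw [mul_smul]; exact I.smul_mem r hsb)
  zero_mem' := ⟨1, one_ne_zero, by simp⟩
  smul_mem' := by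
    rintro c a ⟨r, hr, hra⟩
    exact ⟨r, hr, by rw [smul_comm]; exact I.smul_mem c hra⟩

variable [IsDomain R]

lemma le_sat (I : Submodule R H) : I ≤ sat I := fun x hx => ⟨1, one_ne_zero, by simpa using hx⟩

lemma mem_sat {I : Submodule R H} {x : H} : x ∈ sat I ↔ ∃ r : R, r ≠ 0 ∧ r • x ∈ I := Iff.rfl

lemma sat_noZeroSMulDivisors (I : Submodule R H) : NoZeroSMulDivisors R (H ⧸ sat I) := by
  constructor
  intro r y hry
  by_cases hr : r = 0
  · exact Or.inl hr
  · right
    obtain ⟨x, rfl⟩ := (sat I).mkQ_surjective y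
    have : (sat I).mkQ (r • x) = 0 := by rw [map_smul, hry]
    rw [Submodule.mkQ_apply, Submodule.Quotient.mk_eq_zero] at this
    obtain ⟨s, hs, hsr⟩ := this
    rw [smul_smul] at hsr
    rw [Submodule.mkQ_apply, Submodule.Quotient.mk_eq_zero]
    exact ⟨s * r, mul_ne_zero hs hr, hsr⟩

lemma sat_twoSided {I : Submodule R H}
    (hI : ∀ x ∈ I, ∀ h : H, h * x ∈ I ∧ x * h ∈ I) :
    ∀ x ∈ sat I, ∀ h : H, h * x ∈ sat I ∧ x * h ∈ sat I := by
  rintro x ⟨r, hr, hrx⟩ h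
  constructor
  · exact ⟨r, hr, by rw [← mul_smul_comm]; exact (hI _ hrx h).1⟩
  · exact ⟨r, hr, by rw [← smul_mul_assoc]; exact (hI _ hrx h).2⟩

lemma sat_vanish {I : Submodule R H} {f : H →ₗ[R] R} (hf : ∀ x ∈ I, f x = 0) :
    ∀ x ∈ sat I, f x = 0 := by
  rintro x ⟨r, hr, hrx⟩
  have : r • f x = 0 := by rw [← map_smul, hf _ hrx]
  rcases smul_eq_zero.mp this with h | h
  · exact absurd h hr
  · exact h

/-- Upgrade a cofinitely-generated ideal into one with finite free quotient. -/
lemma exists_good [IsPrincipalIdealRing R] {I : Submodule R H} {f : H →ₗ[R] R}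
    (hI : ∀ x ∈ I, ∀ h : H, h * x ∈ I ∧ x * h ∈ I)
    (hf : ∀ x ∈ I, f x = 0)
    (hcofg : ∃ S : Finset H, ∀ h : H, ∃ i ∈ I, h - i ∈ Submodule.span R (S : Set H)) :
    ∃ J : Submodule R H,
      (∀ x ∈ J, ∀ h : H, h * x ∈ J ∧ x * h ∈ J) ∧ (∀ x ∈ J, f x = 0) ∧
        Module.Finite R (H ⧸ J) ∧ Module.Free R (H ⧸ J) := by
  haveI : Module.Finite R (H ⧸ I) := (cofg_iff I).mp hcofg
  haveI : Module.Finite R (H ⧸ sat I) := finite_quot_of_le (le_sat I)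
  haveI := sat_noZeroSMulDivisors I
  exact ⟨sat I, sat_twoSided hI, sat_vanish hf, inferInstance, inferInstance⟩

section Action

variable (I : Submodule R H) (hI : ∀ x ∈ I, ∀ h : H, h * x ∈ I)

/-- Left multiplication action of `H` on `H ⧸ I` for a left ideal `I`. -/
noncomputable def actL : H →ₗ[R] ((H ⧸ I) →ₗ[R] (H ⧸ I)) where
  toFun x := Submodule.mapQ I I (LinearMap.mulLeft R x)
    (show I ≤ Submodule.comap (LinearMap.mulLeft R x) I from fun u hu => hI u hu x)
  map_add' x y := by
    apply Submodule.linearMap_qext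
    ext u
    simp [Submodule.mapQ_apply, add_mul]
  map_smul' r x := by
    apply Submodule.linearMap_qext
    ext u
    simp [Submodule.mapQ_apply, smul_mul_assoc]

lemma actL_apply (x u : H) : actL I hI x (I.mkQ u) = I.mkQ (x * u) := by
  simp [actL, Submodule.mapQ_apply, Submodule.mkQ_apply]

lemma actL_mul (x y : H) : actL I hI (x * y) = actL I hI x ∘ₗ actL I hI y := by
  apply Submodule.linearMap_qext
  ext u
  simp only [LinearMap.comp_apply, Submodule.mkQ_apply, ← Submodule.mkQ_apply]
  rw [actL_apply, actL_apply, actL_apply, mul_assoc]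

end Action

section Conv

variable (I J : Submodule R H) (hI : ∀ x ∈ I, ∀ h : H, h * x ∈ I)
  (hJ : ∀ x ∈ J, ∀ h : H, h * x ∈ J)

/-- The map sending `s ∈ H ⊗ H` to its action on `(H⧸I) ⊗ (H⧸J)`. -/
noncomputable def muMap : H ⊗[R] H →ₗ[R]
    ((H ⧸ I) ⊗[R] (H ⧸ J) →ₗ[R] (H ⧸ I) ⊗[R] (H ⧸ J)) :=
  TensorProduct.homTensorHomMap (RingHom.id R) _ _ _ _ ∘ₗ TensorProduct.map (actL I hI) (actL J hJ)

lemma muMap_tmul (a b : H) :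
    muMap I J hI hJ (a ⊗ₜ b) = TensorProduct.map (actL I hI a) (actL J hJ b) := by
  simp [muMap]

lemma muMap_mul (s t : H ⊗[R] H) :
    muMap I J hI hJ (s * t) = muMap I J hI hJ s ∘ₗ muMap I J hI hJ t := by
  induction s using TensorProduct.induction_on with
  | zero => simp
  | tmul a b =>
    induction t using TensorProduct.induction_on with
    | zero => simp
    | tmul c d =>
      rw [Algebra.TensorProduct.tmul_mul_tmul, muMap_tmul, muMap_tmul, muMap_tmul,
        actL_mul, actL_mul, TensorProduct.map_comp]
    | add u v hu hv => rw [mul_add, map_add, hu, hv, map_add, LinearMap.comp_add]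
  | add u v hu hv => rw [add_mul, map_add, hu, hv, map_add, LinearMap.add_comp]

lemma muMap_apply_one (s : H ⊗[R] H) :
    muMap I J hI hJ s (I.mkQ 1 ⊗ₜ J.mkQ 1) = TensorProduct.map I.mkQ J.mkQ s := by
  induction s using TensorProduct.induction_on with
  | zero => simp
  | tmul a b => rw [muMap_tmul]; simp only [map_tmul, ← Submodule.mkQ_apply, actL_apply, mul_one]
  | add u v hu hv => rw [map_add, LinearMap.add_apply, hu, hv, map_add]

/-- The action map `H → End((H⧸I) ⊗ (H⧸J))` through comultiplication. -/
noncomputable def alphaMap : H →ₗ[R]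
    ((H ⧸ I) ⊗[R] (H ⧸ J) →ₗ[R] (H ⧸ I) ⊗[R] (H ⧸ J)) :=
  muMap I J hI hJ ∘ₗ Coalgebra.comul

lemma alphaMap_mul (x y : H) :
    alphaMap I J hI hJ (x * y) = alphaMap I J hI hJ x ∘ₗ alphaMap I J hI hJ y := by
  simp only [alphaMap, LinearMap.comp_apply, Bialgebra.comul_mul, muMap_mul]

lemma comul_eq_zero_of_alpha {x : H} (hx : alphaMap I J hI hJ x = 0) :
    TensorProduct.map I.mkQ J.mkQ (Coalgebra.comul (R := R) x) = 0 := by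
  rw [← muMap_apply_one I J hI hJ]
  have : muMap I J hI hJ (Coalgebra.comul (R := R) x) = 0 := hx
  rw [this]
  rfl

end Conv


end
end HopfDualAux

/-- **The Hopf dual `H°` of a torsion-free Hopf algebra over a PID.**  Let `R` be a PID
and `H` a torsion-free Hopf `R`-algebra, and let
`H° = {f ∈ Hom_R(H,R) : f vanishes on an ideal I with H/I f.g. over R}`.  Then every
`f ∈ H°` vanishes on an ideal `I` with `H/I` free of finite rank, and `H°` is an
`R`-submodule of `Hom_R(H,R)` closed under the convolution product, containing the
counit (the unit for convolution), closed under the antipode dual `f ↦ f ∘ S`, and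
closed under the dual comultiplication (the dual of the multiplication of `H` restricts
to `H° → H° ⊗ H°`); i.e. `H°` is a Hopf `R`-algebra. -/
theorem hopf_dual_is_hopf_algebra [NoZeroSMulDivisors R H] :
    (∀ f : H →ₗ[R] R, VanishesOnCofg R H f → VanishesOnCofree R H f) ∧
    VanishesOnCofg R H 0 ∧
    (∀ f g : H →ₗ[R] R, VanishesOnCofg R H f → VanishesOnCofg R H g →
      VanishesOnCofg R H (f + g)) ∧
    (∀ (r : R) (f : H →ₗ[R] R), VanishesOnCofg R H f → VanishesOnCofg R H (r • f)) ∧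
    VanishesOnCofg R H (Coalgebra.counit (R := R) (A := H)) ∧
    (∀ f g : H →ₗ[R] R, VanishesOnCofg R H f → VanishesOnCofg R H g →
      VanishesOnCofg R H (convolution R H f g)) ∧
    (∀ f : H →ₗ[R] R, VanishesOnCofg R H f →
      VanishesOnCofg R H (f ∘ₗ HopfAlgebra.antipode (R := R) (A := H))) ∧
    (∀ f : H →ₗ[R] R, VanishesOnCofg R H f →
      ∃ (m : ℕ) (g h : Fin m → (H →ₗ[R] R)),
        (∀ j, VanishesOnCofg R H (g j)) ∧ (∀ j, VanishesOnCofg R H (h j)) ∧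
        ∀ x y : H, f (x * y) = ∑ j, g j x * h j y) := by

  classical
  open HopfDualAux in
  have upgrade : ∀ f : H →ₗ[R] R, VanishesOnCofg R H f → ∃ J : Submodule R H,
      (∀ x ∈ J, ∀ h : H, h * x ∈ J ∧ x * h ∈ J) ∧ (∀ x ∈ J, f x = 0) ∧
        Module.Finite R (H ⧸ J) ∧ Module.Free R (H ⧸ J) := by
    rintro f ⟨I, hI2, hIf, hcofg⟩
    exact HopfDualAux.exists_good hI2 hIf hcofg
  have basis_pack : ∀ (J : Submodule R H), Module.Finite R (H ⧸ J) → Module.Free R (H ⧸ J) →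
      ∃ (m : ℕ) (b : Fin m → H) (c : H →ₗ[R] (Fin m → R)),
        (∀ h : H, h - ∑ j, c h j • b j ∈ J) ∧ (∀ x ∈ J, c x = 0) ∧
          (∀ (h : H) (c' : Fin m → R), (h - ∑ j, c' j • b j ∈ J) → c' = c h) := by
    intro J hfin hfree
    haveI := hfin; haveI := hfree
    let bb := (Module.Free.chooseBasis R (H ⧸ J)).reindex (Fintype.equivFin _)
    refine ⟨Fintype.card (Module.Free.ChooseBasisIndex R (H ⧸ J)),
      fun j => Function.surjInv J.mkQ_surjective (bb j),
      (bb.equivFun.toLinearMap) ∘ₗ J.mkQ, ?_, ?_, ?_⟩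
    · intro h
      have h1 : J.mkQ (h - ∑ j, ((bb.equivFun.toLinearMap ∘ₗ J.mkQ) h) j •
          Function.surjInv J.mkQ_surjective (bb j)) = 0 := by
        rw [map_sub, map_sum]
        simp only [map_smul, Function.surjInv_eq J.mkQ_surjective, LinearMap.comp_apply,
          LinearEquiv.coe_coe]
        rw [Module.Basis.sum_equivFun]
        exact sub_self _
      exact (Submodule.Quotient.mk_eq_zero J).mp (by simpa [Submodule.mkQ_apply] using h1)
    · intro x hx
      have : J.mkQ x = 0 := by
        rw [Submodule.mkQ_apply, Submodule.Quotient.mk_eq_zero]; exact hx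
      simp [LinearMap.comp_apply, this]
    · intro h c' hc'
      have h1 : J.mkQ (h - ∑ j, c' j • Function.surjInv J.mkQ_surjective (bb j)) = 0 := by
        have := (Submodule.Quotient.mk_eq_zero J).mpr hc'
        simpa [Submodule.mkQ_apply] using this
      rw [map_sub, sub_eq_zero, map_sum] at h1
      simp only [map_smul, Function.surjInv_eq J.mkQ_surjective] at h1
      rw [← Module.Basis.equivFun_symm_apply] at h1
      simp only [LinearMap.comp_apply, LinearEquiv.coe_coe]
      rw [h1, LinearEquiv.apply_symm_apply]
  refine ⟨?_, ?_, ?_, ?_, ?_, ?_, ?_, ?_⟩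
  · -- part 1 : cofg → cofree
    rintro f hf
    obtain ⟨J, hJ2, hJf, hfin, hfree⟩ := upgrade f hf
    obtain ⟨m, b, c, hkey, hvan, huniq⟩ := basis_pack J hfin hfree
    exact ⟨J, hJ2, hJf, m, b, fun h => ⟨c h, hkey h, fun c' hc' => huniq h c' hc'⟩⟩
  · -- part 2 : zero
    exact ⟨⊤, fun x _ h => ⟨trivial, trivial⟩, fun x _ => rfl,
      ⟨∅, fun h => ⟨h, trivial, by simp⟩⟩⟩
  · -- part 3 : add
    rintro f g ⟨I, hI2, hIf, hIc⟩ ⟨J, hJ2, hJf, hJc⟩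
    refine ⟨I ⊓ J, ?_, ?_, ?_⟩
    · rintro x ⟨hxI, hxJ⟩ h
      exact ⟨⟨(hI2 x hxI h).1, (hJ2 x hxJ h).1⟩, ⟨(hI2 x hxI h).2, (hJ2 x hxJ h).2⟩⟩
    · rintro x ⟨hxI, hxJ⟩
      simp [hIf x hxI, hJf x hxJ]
    · haveI := (HopfDualAux.cofg_iff I).mp hIc
      haveI := (HopfDualAux.cofg_iff J).mp hJc
      refine (HopfDualAux.cofg_iff _).mpr ?_
      have hk : I ⊓ J = LinearMap.ker (LinearMap.prod I.mkQ J.mkQ) := by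
        rw [LinearMap.ker_prod, Submodule.ker_mkQ, Submodule.ker_mkQ]
      rw [hk]
      exact HopfDualAux.finite_quot_ker _
  · -- part 4 : smul
    rintro r f ⟨I, hI2, hIf, hIc⟩
    exact ⟨I, hI2, fun x hx => by simp [hIf x hx], hIc⟩
  · -- part 5 : counit
    refine ⟨LinearMap.ker (Coalgebra.counit (R := R) (A := H)), ?_, fun x hx => hx, ?_⟩
    · intro x hx h
      rw [LinearMap.mem_ker] at hx
      constructor <;> rw [LinearMap.mem_ker, Bialgebra.counit_mul, hx] <;> ring
    · exact (HopfDualAux.cofg_iff _).mpr (HopfDualAux.finite_quot_ker _)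
  · -- part 6 : convolution
    rintro f g hf hg
    obtain ⟨I, hI2, hIf, hIfin, hIfree⟩ := upgrade f hf
    obtain ⟨J, hJ2, hJf, hJfin, hJfree⟩ := upgrade g hg
    haveI := hIfin; haveI := hIfree; haveI := hJfin; haveI := hJfree
    have hI' : ∀ x ∈ I, ∀ h : H, h * x ∈ I := fun x hx h => (hI2 x hx h).1
    have hJ' : ∀ x ∈ J, ∀ h : H, h * x ∈ J := fun x hx h => (hJ2 x hx h).1
    refine ⟨LinearMap.ker (HopfDualAux.alphaMap I J hI' hJ'), ?_, ?_, ?_⟩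
    · intro x hx h
      rw [LinearMap.mem_ker] at hx
      constructor
      · rw [LinearMap.mem_ker, HopfDualAux.alphaMap_mul I J hI' hJ' h x, hx,
          LinearMap.comp_zero]
      · rw [LinearMap.mem_ker, HopfDualAux.alphaMap_mul I J hI' hJ' x h, hx,
          LinearMap.zero_comp]
    · intro x hx
      rw [LinearMap.mem_ker] at hx
      have h0 := HopfDualAux.comul_eq_zero_of_alpha I J hI' hJ' hx
      have hIf' : I ≤ LinearMap.ker f := fun z hz => LinearMap.mem_ker.mpr (hIf z hz)
      have hJf' : J ≤ LinearMap.ker g := fun z hz => LinearMap.mem_ker.mpr (hJf z hz)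
      have hmap : TensorProduct.map f g =
          TensorProduct.map (I.liftQ f hIf') (J.liftQ g hJf') ∘ₗ
            TensorProduct.map I.mkQ J.mkQ := by
        rw [← TensorProduct.map_comp, Submodule.liftQ_mkQ, Submodule.liftQ_mkQ]
      show (convolution R H f g) x = 0
      simp only [convolution, LinearMap.comp_apply]
      rw [hmap, LinearMap.comp_apply, h0, map_zero, map_zero]
    · haveI t3 : Module.Finite R ((H ⧸ I) ⊗[R] (H ⧸ J) →ₗ[R] (H ⧸ I) ⊗[R] (H ⧸ J)) :=
        inferInstance
      haveI t4 : IsNoetherianRing R := inferInstance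
      have hfin := @HopfDualAux.finite_quot_ker R _ H _ _
          ((H ⧸ I) ⊗[R] (H ⧸ J) →ₗ[R] (H ⧸ I) ⊗[R] (H ⧸ J)) _ _ t3 t4
          (HopfDualAux.alphaMap I J hI' hJ')
      exact (HopfDualAux.cofg_iff _).mpr hfin
  · -- part 7 : antipode
    rintro f ⟨I, hI2, hIf, hIc⟩
    refine ⟨Submodule.comap (HopfAlgebra.antipode (R := R) (A := H)) I, ?_, ?_, ?_⟩
    · intro x hx h
      rw [Submodule.mem_comap] at hx
      constructor
      · rw [Submodule.mem_comap, HopfDualAux.antipode_mul]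
        exact (hI2 _ hx (HopfAlgebra.antipode (R := R) h)).2
      · rw [Submodule.mem_comap, HopfDualAux.antipode_mul]
        exact (hI2 _ hx (HopfAlgebra.antipode (R := R) h)).1
    · intro x hx
      exact hIf _ (Submodule.mem_comap.mp hx)
    · haveI := (HopfDualAux.cofg_iff I).mp hIc
      refine (HopfDualAux.cofg_iff _).mpr ?_
      have hk : Submodule.comap (HopfAlgebra.antipode (R := R) (A := H)) I =
          LinearMap.ker (I.mkQ ∘ₗ HopfAlgebra.antipode (R := R) (A := H)) := by
        rw [LinearMap.ker_comp, Submodule.ker_mkQ]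
      rw [hk]
      exact HopfDualAux.finite_quot_ker _
  · -- part 8 : matrix coefficients
    rintro f hf
    obtain ⟨I, hI2, hIf, hfin, hfree⟩ := upgrade f hf
    obtain ⟨m, b, c, hkey, hvan, huniq⟩ := basis_pack I hfin hfree
    have hcofg := (HopfDualAux.cofg_iff I).mpr hfin
    have claimA : ∀ z : H, f z = ∑ i, c z i * f (b i) := by
      intro z
      calc f z = f (z - ∑ i, c z i • b i) + f (∑ i, c z i • b i) := by
            rw [← map_add, sub_add_cancel]
        _ = f (∑ i, c z i • b i) := by rw [hIf _ (hkey z), zero_add]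
        _ = ∑ i, c z i * f (b i) := by rw [map_sum]; simp [smul_eq_mul]
    have claimB : ∀ x y : H, (fun i => ∑ k, c (x * b k) i * c y k) = c (x * y) := by
      intro x y
      refine huniq (x * y) _ ?_
      have e1 : x * y - ∑ i, (∑ k, c (x * b k) i * c y k) • b i
          = x * (y - ∑ k, c y k • b k) +
            ∑ k, c y k • (x * b k - ∑ i, c (x * b k) i • b i) := by
        simp only [mul_sub, smul_sub, Finset.mul_sum, Finset.smul_sum, mul_smul_comm,
          smul_smul, Finset.sum_smul]
        rw [Finset.sum_sub_distrib, sub_add_sub_cancel]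
        congr 1
        rw [Finset.sum_comm]
        refine Finset.sum_congr rfl fun i _ => Finset.sum_congr rfl fun k _ => ?_
        rw [mul_comm]
      rw [e1]
      exact Submodule.add_mem I ((hI2 _ (hkey y) x).1)
        (Submodule.sum_mem I fun k _ => Submodule.smul_mem I _ (hkey (x * b k)))
    refine ⟨m * m,
      (fun p : Fin m × Fin m => f (b p.1) •
        ((LinearMap.proj p.1).comp (c ∘ₗ LinearMap.mulRight R (b p.2)))) ∘
        finProdFinEquiv.symm,
      (fun p : Fin m × Fin m => (LinearMap.proj p.2).comp c) ∘ finProdFinEquiv.symm,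
      ?_, ?_, ?_⟩
    · intro j
      refine ⟨I, hI2, ?_, hcofg⟩
      intro x hx
      have hxb : x * b (finProdFinEquiv.symm j).2 ∈ I := (hI2 x hx _).2
      have hc0 : c (x * b (finProdFinEquiv.symm j).2) = 0 := hvan _ hxb
      simp only [Function.comp_apply, LinearMap.smul_apply, LinearMap.comp_apply,
        LinearMap.mulRight_apply, LinearMap.proj_apply, hc0, Pi.zero_apply, smul_zero]
    · intro j
      refine ⟨I, hI2, ?_, hcofg⟩
      intro x hx
      simp [Function.comp, hvan _ hx]
    · intro x y
      have hs := Equiv.sum_comp (finProdFinEquiv.symm : Fin (m * m) ≃ Fin m × Fin m)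
        (fun p : Fin m × Fin m =>
          (f (b p.1) • ((LinearMap.proj p.1).comp (c ∘ₗ LinearMap.mulRight R (b p.2)))) x *
            ((LinearMap.proj p.2).comp c) y)
      calc f (x * y) = ∑ i, c (x * y) i * f (b i) := claimA (x * y)
        _ = ∑ i, (∑ k, c (x * b k) i * c y k) * f (b i) := by
            rw [← claimB x y]
        _ = ∑ p : Fin m × Fin m,
              (f (b p.1) • ((LinearMap.proj p.1).comp (c ∘ₗ LinearMap.mulRight R (b p.2)))) x *
                ((LinearMap.proj p.2).comp c) y := by
            rw [Fintype.sum_prod_type]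
            simp only [LinearMap.smul_apply, LinearMap.comp_apply, LinearMap.proj_apply,
              LinearMap.mulRight_apply, smul_eq_mul, Finset.sum_mul]
            refine Finset.sum_congr rfl fun i _ => Finset.sum_congr rfl fun k _ => ?_
            ring
        _ = _ := hs.symm
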